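/- If a nonzero formal power series φ in d variables has a polygonal Newton polyhedron (every compact face has dimension at most one), then any irreducible factor of φ that is not associated to one of the variables X_1, …, X_d also has a polygonal Newton polyhedron. -/

import Mathlib

/-- The Newton polyhedron of a power series `φ = Σ c_a X^a` in `d` variables. -/
noncomputable def newtonPolyhedron {d : ℕ} (φ : MvPowerSeries (Fin d) ℂ) :
    Set (Fin d → ℝ) :=
  convexHull ℝ {x | ∃ a : Fin d →₀ ℕ,
    MvPowerSeries.coeff a φ ≠ 0 ∧ ∀ i, (a i : ℝ) ≤ x i}

open Pointwise

namespace NewtonAux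

variable {d : ℕ}

/-- The linear functional `x ↦ ∑ i, w i * x i`. -/
noncomputable def wlin (w : Fin d → ℝ) : (Fin d → ℝ) →ₗ[ℝ] ℝ where
  toFun x := ∑ i, w i * x i
  map_add' x y := by simp [mul_add, Finset.sum_add_distrib]
  map_smul' c x := by simp [Finset.mul_sum, mul_left_comm]

lemma wlin_apply (w x : Fin d → ℝ) : wlin w x = ∑ i, w i * x i := rfl

/-- Cast a multi-index to a real vector. -/
def cst (a : Fin d →₀ ℕ) : Fin d → ℝ := fun i => (a i : ℝ)

lemma cst_add (a b : Fin d →₀ ℕ) : cst (a + b) = cst a + cst b := by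
  funext i; simp [cst]

/-- Finiteness of sublevel sets of a positive weight. -/
lemma finite_wle (w : Fin d → ℝ) (hw : ∀ i, 0 < w i) (C : ℝ) :
    {a : Fin d →₀ ℕ | wlin w (cst a) ≤ C}.Finite := by
  have hsub : {a : Fin d →₀ ℕ | wlin w (cst a) ≤ C} ⊆
      (fun a : Fin d →₀ ℕ => (a : Fin d → ℕ)) ⁻¹'
        (Set.univ.pi fun i => Set.Iic (Nat.floor (C / w i))) := by
    intro a ha
    simp only [Set.mem_preimage, Set.mem_pi, Set.mem_univ, Set.mem_Iic, forall_true_left]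
    intro i
    have hterm : ∀ j, 0 ≤ w j * (a j : ℝ) := fun j =>
      mul_nonneg (hw j).le (Nat.cast_nonneg _)
    have h1 : w i * (a i : ℝ) ≤ ∑ j, w j * (a j : ℝ) :=
      Finset.single_le_sum (fun j _ => hterm j) (Finset.mem_univ i)
    have h2 : w i * (a i : ℝ) ≤ C := h1.trans ha
    have h3 : (a i : ℝ) ≤ C / w i := (le_div_iff₀' (hw i)).mpr h2
    exact Nat.le_floor h3
  refine Set.Finite.subset (Set.Finite.preimage ?_ ?_) hsub
  · exact Set.injOn_of_injective (DFunLike.coe_injective)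
  · exact Set.Finite.pi fun i => Set.finite_Iic _

/-- Existence of the minimal weight of a nonzero power series. -/
lemma exists_min (w : Fin d → ℝ) (hw : ∀ i, 0 < w i) {ρ : MvPowerSeries (Fin d) ℂ}
    (hρ : ρ ≠ 0) :
    ∃ m : ℝ, (∃ a, MvPowerSeries.coeff a ρ ≠ 0 ∧ wlin w (cst a) = m) ∧
      ∀ a, MvPowerSeries.coeff a ρ ≠ 0 → m ≤ wlin w (cst a) := by
  have h0 : ∃ a, MvPowerSeries.coeff a ρ ≠ 0 := by
    by_contra h
    push_neg at h
    exact hρ (MvPowerSeries.ext fun a => by simp [h a])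
  obtain ⟨a₀, ha₀⟩ := h0
  set K : Set (Fin d →₀ ℕ) :=
    {a | MvPowerSeries.coeff a ρ ≠ 0 ∧ wlin w (cst a) ≤ wlin w (cst a₀)} with hK
  have hKfin : K.Finite := (finite_wle w hw (wlin w (cst a₀))).subset fun a ha => ha.2
  have hKne : hKfin.toFinset.Nonempty := ⟨a₀, by simp [hK, ha₀]⟩
  obtain ⟨am, ham, hmin⟩ := hKfin.toFinset.exists_min_image (fun a => wlin w (cst a)) hKne
  rw [Set.Finite.mem_toFinset] at ham
  refine ⟨wlin w (cst am), ⟨am, ham.1, rfl⟩, fun a ha => ?_⟩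
  by_cases hle : wlin w (cst a) ≤ wlin w (cst a₀)
  · exact hmin a (by simp [Set.Finite.mem_toFinset, hK, ha, hle])
  · push_neg at hle
    exact le_trans ham.2 hle.le

/-- Lower bound for the weight of coefficients of a product. -/
lemma mul_lb (w : Fin d → ℝ) {ψ χ : MvPowerSeries (Fin d) ℂ} {mψ mχ : ℝ}
    (hψlb : ∀ a, MvPowerSeries.coeff a ψ ≠ 0 → mψ ≤ wlin w (cst a))
    (hχlb : ∀ a, MvPowerSeries.coeff a χ ≠ 0 → mχ ≤ wlin w (cst a)) :
    ∀ a, MvPowerSeries.coeff a (ψ * χ) ≠ 0 → mψ + mχ ≤ wlin w (cst a) := by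
  intro a ha
  rw [MvPowerSeries.coeff_mul] at ha
  obtain ⟨p, hp, hne⟩ := Finset.exists_ne_zero_of_sum_ne_zero ha
  rw [Finset.HasAntidiagonal.mem_antidiagonal] at hp
  have h1 : MvPowerSeries.coeff p.1 ψ ≠ 0 := fun h => hne (by rw [h, zero_mul])
  have h2 : MvPowerSeries.coeff p.2 χ ≠ 0 := fun h => hne (by rw [h, mul_zero])
  have : wlin w (cst a) = wlin w (cst p.1) + wlin w (cst p.2) := by
    rw [← map_add, ← cst_add, hp]
  rw [this]
  exact add_le_add (hψlb _ h1) (hχlb _ h2)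

/-- The key lemma: the initial parts multiply. Given nonzero `ψ, χ` with minimal
`w`-weights `mψ, mχ`, and any linear functional `g`, there exist multi-indices `b, c`
of minimal weight in `ψ, χ` respectively, maximizing `g` among those, with
`coeff (b+c) (ψ*χ) ≠ 0`. -/
lemma key (w : Fin d → ℝ) (hw : ∀ i, 0 < w i) {ψ χ : MvPowerSeries (Fin d) ℂ}
    {mψ mχ : ℝ}
    (hψm : ∃ a, MvPowerSeries.coeff a ψ ≠ 0 ∧ wlin w (cst a) = mψ)
    (hψlb : ∀ a, MvPowerSeries.coeff a ψ ≠ 0 → mψ ≤ wlin w (cst a))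
    (hχm : ∃ a, MvPowerSeries.coeff a χ ≠ 0 ∧ wlin w (cst a) = mχ)
    (hχlb : ∀ a, MvPowerSeries.coeff a χ ≠ 0 → mχ ≤ wlin w (cst a))
    (g : (Fin d → ℝ) →ₗ[ℝ] ℝ) :
    ∃ b c : Fin d →₀ ℕ,
      (MvPowerSeries.coeff b ψ ≠ 0 ∧ wlin w (cst b) = mψ) ∧
      (MvPowerSeries.coeff c χ ≠ 0 ∧ wlin w (cst c) = mχ) ∧
      MvPowerSeries.coeff (b + c) (ψ * χ) ≠ 0 ∧
      (∀ b', MvPowerSeries.coeff b' ψ ≠ 0 → wlin w (cst b') = mψ →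
        g (cst b') ≤ g (cst b)) ∧
      (∀ c', MvPowerSeries.coeff c' χ ≠ 0 → wlin w (cst c') = mχ →
        g (cst c') ≤ g (cst c)) := by
  classical
  -- the finite sets of minimal-weight exponents
  set Vψ : Set (Fin d →₀ ℕ) :=
    {a | MvPowerSeries.coeff a ψ ≠ 0 ∧ wlin w (cst a) = mψ} with hVψ
  set Vχ : Set (Fin d →₀ ℕ) :=
    {a | MvPowerSeries.coeff a χ ≠ 0 ∧ wlin w (cst a) = mχ} with hVχ
  have hVψfin : Vψ.Finite := (finite_wle w hw mψ).subset fun a ha => ha.2.le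
  have hVχfin : Vχ.Finite := (finite_wle w hw mχ).subset fun a ha => ha.2.le
  have hVψne : hVψfin.toFinset.Nonempty := by
    obtain ⟨a, h1, h2⟩ := hψm; exact ⟨a, by simp [hVψ, h1, h2]⟩
  have hVχne : hVχfin.toFinset.Nonempty := by
    obtain ⟨a, h1, h2⟩ := hχm; exact ⟨a, by simp [hVχ, h1, h2]⟩
  obtain ⟨b₀, hb₀mem, hb₀max⟩ :=
    hVψfin.toFinset.exists_max_image (fun a => g (cst a)) hVψne
  obtain ⟨c₀, hc₀mem, hc₀max⟩ :=
    hVχfin.toFinset.exists_max_image (fun a => g (cst a)) hVχne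
  rw [Set.Finite.mem_toFinset] at hb₀mem hc₀mem
  -- the top slices
  set Wψ : Finset (Fin d →₀ ℕ) :=
    hVψfin.toFinset.filter (fun a => g (cst a) = g (cst b₀)) with hWψ
  set Wχ : Finset (Fin d →₀ ℕ) :=
    hVχfin.toFinset.filter (fun a => g (cst a) = g (cst c₀)) with hWχ
  have hmemWψ : ∀ a, a ∈ Wψ ↔ (a ∈ Vψ ∧ g (cst a) = g (cst b₀)) := by
    intro a; simp [hWψ, Set.Finite.mem_toFinset]
  have hmemWχ : ∀ a, a ∈ Wχ ↔ (a ∈ Vχ ∧ g (cst a) = g (cst c₀)) := by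
    intro a; simp [hWχ, Set.Finite.mem_toFinset]
  -- the initial polynomials
  set p : MvPolynomial (Fin d) ℂ :=
    ∑ b ∈ Wψ, MvPolynomial.monomial b (MvPowerSeries.coeff b ψ) with hp
  set q : MvPolynomial (Fin d) ℂ :=
    ∑ c ∈ Wχ, MvPolynomial.monomial c (MvPowerSeries.coeff c χ) with hq
  have hpc : ∀ b, p.coeff b = if b ∈ Wψ then MvPowerSeries.coeff b ψ else 0 := by
    intro b
    rw [hp, MvPolynomial.coeff_sum]
    simp only [MvPolynomial.coeff_monomial]
    rw [Finset.sum_ite_eq' Wψ b (fun b' => MvPowerSeries.coeff b' ψ)]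
  have hqc : ∀ c, q.coeff c = if c ∈ Wχ then MvPowerSeries.coeff c χ else 0 := by
    intro c
    rw [hq, MvPolynomial.coeff_sum]
    simp only [MvPolynomial.coeff_monomial]
    rw [Finset.sum_ite_eq' Wχ c (fun c' => MvPowerSeries.coeff c' χ)]
  have hpne : p ≠ 0 := by
    intro h
    have : p.coeff b₀ = 0 := by rw [h]; simp
    rw [hpc b₀, if_pos ((hmemWψ b₀).mpr ⟨hb₀mem, rfl⟩)] at this
    exact hb₀mem.1 this
  have hqne : q ≠ 0 := by
    intro h
    have : q.coeff c₀ = 0 := by rw [h]; simp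
    rw [hqc c₀, if_pos ((hmemWχ c₀).mpr ⟨hc₀mem, rfl⟩)] at this
    exact hc₀mem.1 this
  have hpqne : p * q ≠ 0 := mul_ne_zero hpne hqne
  obtain ⟨a, hasupp⟩ := MvPolynomial.support_nonempty.mpr hpqne
  obtain ⟨b, hb, c, hc, hbc⟩ := Finset.mem_add.mp (MvPolynomial.support_mul p q hasupp)
  have hbW : b ∈ Wψ := by
    by_contra h
    exact (MvPolynomial.mem_support_iff.mp hb) (by rw [hpc b, if_neg h])
  have hcW : c ∈ Wχ := by
    by_contra h
    exact (MvPolynomial.mem_support_iff.mp hc) (by rw [hqc c, if_neg h])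
  have hbV := (hmemWψ b).mp hbW
  have hcV := (hmemWχ c).mp hcW
  -- decompositions of `a` into nonzero coefficients lie in the top slices
  have hga : g (cst a) = g (cst b₀) + g (cst c₀) := by
    rw [← hbc, cst_add, map_add, hbV.2, hcV.2]
  have hwa : wlin w (cst a) = mψ + mχ := by
    rw [← hbc, cst_add, map_add, hbV.1.2, hcV.1.2]
  have hclaim : ∀ x : (Fin d →₀ ℕ) × (Fin d →₀ ℕ), x.1 + x.2 = a →
      MvPowerSeries.coeff x.1 ψ ≠ 0 → MvPowerSeries.coeff x.2 χ ≠ 0 →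
      x.1 ∈ Wψ ∧ x.2 ∈ Wχ := by
    intro x hx h1 h2
    have hsum : wlin w (cst x.1) + wlin w (cst x.2) = mψ + mχ := by
      rw [← map_add, ← cst_add, hx, hwa]
    have hle1 := hψlb x.1 h1
    have hle2 := hχlb x.2 h2
    have he1 : wlin w (cst x.1) = mψ := by linarith
    have he2 : wlin w (cst x.2) = mχ := by linarith
    have hx1V : x.1 ∈ Vψ := ⟨h1, he1⟩
    have hx2V : x.2 ∈ Vχ := ⟨h2, he2⟩
    have hg1 := hb₀max x.1 (hVψfin.mem_toFinset.mpr hx1V)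
    have hg2 := hc₀max x.2 (hVχfin.mem_toFinset.mpr hx2V)
    have hgsum : g (cst x.1) + g (cst x.2) = g (cst b₀) + g (cst c₀) := by
      rw [← map_add, ← cst_add, hx, hga]
    exact ⟨(hmemWψ x.1).mpr ⟨hx1V, by linarith⟩, (hmemWχ x.2).mpr ⟨hx2V, by linarith⟩⟩
  -- the coefficient of the product power series agrees with that of `p * q` at `a`
  have hkey : MvPowerSeries.coeff a (ψ * χ) = (p * q).coeff a := by
    rw [MvPowerSeries.coeff_mul, MvPolynomial.coeff_mul]
    refine Finset.sum_congr rfl fun x hx => ?_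
    rw [Finset.HasAntidiagonal.mem_antidiagonal] at hx
    rw [hpc x.1, hqc x.2]
    by_cases h1 : MvPowerSeries.coeff x.1 ψ = 0
    · rw [h1, zero_mul]
      split_ifs with hm1 hm2 hm2 <;> simp [h1]
    by_cases h2 : MvPowerSeries.coeff x.2 χ = 0
    · rw [h2, mul_zero]
      split_ifs with hm1 hm2 hm2 <;> simp [h2]
    obtain ⟨hm1, hm2⟩ := hclaim x hx h1 h2
    rw [if_pos hm1, if_pos hm2]
  refine ⟨b, c, hbV.1, hcV.1, ?_, ?_, ?_⟩
  · rw [hbc, hkey]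
    exact MvPolynomial.mem_support_iff.mp hasupp
  · intro b' h1 h2
    rw [hbV.2]
    exact hb₀max b' (hVψfin.mem_toFinset.mpr ⟨h1, h2⟩)
  · intro c' h1 h2
    rw [hcV.2]
    exact hc₀max c' (hVχfin.mem_toFinset.mpr ⟨h1, h2⟩)

/-- The generating set of the Newton polyhedron. -/
def NT (ρ : MvPowerSeries (Fin d) ℂ) : Set (Fin d → ℝ) :=
  {x | ∃ a : Fin d →₀ ℕ, MvPowerSeries.coeff a ρ ≠ 0 ∧ ∀ i, (a i : ℝ) ≤ x i}

lemma newton_eq (ρ : MvPowerSeries (Fin d) ℂ) :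
    newtonPolyhedron ρ = convexHull ℝ (NT ρ) := rfl

lemma cst_mem_NT {ρ : MvPowerSeries (Fin d) ℂ} {a : Fin d →₀ ℕ}
    (ha : MvPowerSeries.coeff a ρ ≠ 0) : cst a ∈ NT ρ :=
  ⟨a, ha, fun i => le_refl _⟩

/-- weight lower bound on points of `NT`. -/
lemma NT_wlb {w : Fin d → ℝ} (hw : ∀ i, 0 < w i) {ρ : MvPowerSeries (Fin d) ℂ} {m : ℝ}
    (hlb : ∀ a, MvPowerSeries.coeff a ρ ≠ 0 → m ≤ wlin w (cst a)) :
    ∀ x ∈ NT ρ, m ≤ wlin w x := by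
  rintro x ⟨a, ha, hle⟩
  refine (hlb a ha).trans ?_
  rw [wlin_apply, wlin_apply]
  exact Finset.sum_le_sum fun i _ => mul_le_mul_of_nonneg_left (hle i) (hw i).le

/-- weight lower bound on the Newton polyhedron. -/
lemma newton_wlb {w : Fin d → ℝ} (hw : ∀ i, 0 < w i) {ρ : MvPowerSeries (Fin d) ℂ} {m : ℝ}
    (hlb : ∀ a, MvPowerSeries.coeff a ρ ≠ 0 → m ≤ wlin w (cst a)) :
    ∀ x ∈ newtonPolyhedron ρ, m ≤ wlin w x := by
  rw [newton_eq]
  exact fun x hx =>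
    convexHull_min (NT_wlb hw hlb) (convex_halfSpace_ge (wlin w).isLinear m) hx

/-- The Newton polyhedron is upward closed. -/
lemma newton_up {ρ : MvPowerSeries (Fin d) ℂ} {x v : Fin d → ℝ}
    (hx : x ∈ newtonPolyhedron ρ) (hv : ∀ i, 0 ≤ v i) : x + v ∈ newtonPolyhedron ρ := by
  rw [newton_eq] at hx ⊢
  have h1 : x + v ∈ convexHull ℝ (NT ρ) + convexHull ℝ {v} := by
    exact Set.add_mem_add hx (by rw [convexHull_singleton]; exact rfl)
  rw [← convexHull_add] at h1
  refine convexHull_mono ?_ h1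
  rintro y ⟨t, ht, v', hv', rfl⟩
  obtain ⟨a, ha, hle⟩ := ht
  rw [Set.mem_singleton_iff] at hv'
  subst hv'
  exact ⟨a, ha, fun i => (hle i).trans (by simpa using hv i)⟩

/-- The face of the Newton polyhedron cut out by the minimal weight is the convex hull
of the minimal-weight exponents. -/
lemma face_eq {w : Fin d → ℝ} (hw : ∀ i, 0 < w i) {ρ : MvPowerSeries (Fin d) ℂ} {m : ℝ}
    (hlb : ∀ a, MvPowerSeries.coeff a ρ ≠ 0 → m ≤ wlin w (cst a)) :
    {x ∈ newtonPolyhedron ρ | wlin w x = m} =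
      convexHull ℝ (cst '' {a | MvPowerSeries.coeff a ρ ≠ 0 ∧ wlin w (cst a) = m}) := by
  apply Set.Subset.antisymm
  · rintro x ⟨hxN, hxm⟩
    rw [newton_eq, convexHull_eq] at hxN
    obtain ⟨ι, t, wt, z, hw0, hw1, hz, hcm⟩ := hxN
    -- each point with positive weight has weight exactly m and lies in the image
    have hzlb : ∀ i ∈ t, m ≤ wlin w (z i) := fun i hi => NT_wlb hw hlb (z i) (hz i hi)
    have hsum : ∑ i ∈ t, wt i * (wlin w (z i) - m) = 0 := by
      have hx' : wlin w x = ∑ i ∈ t, wt i * wlin w (z i) := by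
        rw [← hcm, Finset.centerMass_eq_of_sum_1 t z hw1, map_sum]
        simp [smul_eq_mul]
      have : ∑ i ∈ t, wt i * (wlin w (z i) - m) =
          (∑ i ∈ t, wt i * wlin w (z i)) - (∑ i ∈ t, wt i) * m := by
        rw [Finset.sum_mul, ← Finset.sum_sub_distrib]
        exact Finset.sum_congr rfl fun i _ => by ring
      rw [this, ← hx', hw1, hxm, one_mul, sub_self]
    have hzero : ∀ i ∈ t, wt i * (wlin w (z i) - m) = 0 :=
      (Finset.sum_eq_zero_iff_of_nonneg fun i hi =>
        mul_nonneg (hw0 i hi) (sub_nonneg.mpr (hzlb i hi))).mp hsum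
    -- restrict to nonzero weights
    set t' : Finset ι := t.filter (fun i => wt i ≠ 0) with ht'
    have hmem : ∀ i ∈ t', z i ∈
        cst '' {a | MvPowerSeries.coeff a ρ ≠ 0 ∧ wlin w (cst a) = m} := by
      intro i hi
      rw [ht', Finset.mem_filter] at hi
      have hzm : wlin w (z i) = m := by
        have := hzero i hi.1
        rcases mul_eq_zero.mp this with h | h
        · exact absurd h hi.2
        · linarith [sub_eq_zero.mp h]
      obtain ⟨a, ha, hle⟩ := hz i hi.1
      have hwa : wlin w (cst a) ≤ m := by
        rw [← hzm, wlin_apply, wlin_apply]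
        exact Finset.sum_le_sum fun j _ => mul_le_mul_of_nonneg_left (hle j) (hw j).le
      have hwa' : wlin w (cst a) = m := le_antisymm hwa (hlb a ha)
      -- all coordinates must agree
      have hcoord : ∀ j, (a j : ℝ) = z i j := by
        intro j
        by_contra hne
        have hlt : (a j : ℝ) < z i j := lt_of_le_of_ne (hle j) hne
        have : wlin w (cst a) < wlin w (z i) := by
          rw [wlin_apply, wlin_apply]
          refine Finset.sum_lt_sum (fun k _ =>
            mul_le_mul_of_nonneg_left (hle k) (hw k).le) ⟨j, Finset.mem_univ j, ?_⟩
          exact mul_lt_mul_of_pos_left hlt (hw j)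
        rw [hwa', hzm] at this
        exact lt_irrefl _ this
      refine ⟨a, ⟨ha, hwa'⟩, ?_⟩
      funext j
      exact hcoord j
    have hsum' : ∑ i ∈ t', wt i = 1 := by
      rw [ht', Finset.sum_filter_ne_zero]
      exact hw1
    have : t'.centerMass wt z = x := by
      rw [ht', Finset.centerMass_filter_ne_zero, hcm]
    rw [← this]
    exact Finset.centerMass_mem_convexHull t'
      (fun i hi => hw0 i (Finset.mem_of_mem_filter i hi)) (by rw [hsum']; norm_num)
      hmem
  · -- reverse inclusion
    have himg : cst '' {a | MvPowerSeries.coeff a ρ ≠ 0 ∧ wlin w (cst a) = m} ⊆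
        {x ∈ newtonPolyhedron ρ | wlin w x = m} := by
      rintro y ⟨a, ⟨ha, ham⟩, rfl⟩
      exact ⟨subset_convexHull ℝ _ (cst_mem_NT ha), ham⟩
    refine convexHull_min himg ?_
    have h1 : Convex ℝ {x | m ≤ wlin w x} := convex_halfSpace_ge (wlin w).isLinear m
    have h2 : Convex ℝ {x | wlin w x ≤ m} := convex_halfSpace_le (wlin w).isLinear m
    have h3 : Convex ℝ (newtonPolyhedron ρ) := convex_convexHull ℝ _
    have : {x ∈ newtonPolyhedron ρ | wlin w x = m} =
        (newtonPolyhedron ρ) ∩ ({x | m ≤ wlin w x} ∩ {x | wlin w x ≤ m}) := by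
      ext x
      simp only [Set.mem_sep_iff, Set.mem_inter_iff, Set.mem_setOf_eq]
      constructor
      · rintro ⟨h1, h2⟩; exact ⟨h1, h2.ge, h2.le⟩
      · rintro ⟨h1, h2, h3⟩; exact ⟨h1, le_antisymm h3 h2⟩
    rw [this]
    exact h3.inter (h1.inter h2)

lemma vs_conv (s : Set (Fin d → ℝ)) :
    vectorSpan ℝ (convexHull ℝ s) = vectorSpan ℝ s := by
  rw [← direction_affineSpan, affineSpan_convexHull, direction_affineSpan]

end NewtonAux

/-- A polyhedron is polygonal if all its (nonempty) compact faces have dimension at most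
one; faces are taken to be exposed faces. -/
def IsPolygonal {d : ℕ} (N : Set (Fin d → ℝ)) : Prop :=
  ∀ F : Set (Fin d → ℝ), IsExposed ℝ N F → IsCompact F → F.Nonempty →
    Module.finrank ℝ (vectorSpan ℝ F) ≤ 1

open NewtonAux in
/-- If a nonzero power series `φ` in `d` variables has a polygonal Newton polyhedron,
then any irreducible factor of `φ` not associated to one of the variables also has a
polygonal Newton polyhedron. -/
theorem stmt3 {d : ℕ} (φ ψ : MvPowerSeries (Fin d) ℂ) (hφ : φ ≠ 0)
    (hpoly : IsPolygonal (newtonPolyhedron φ))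
    (hψ : Irreducible ψ) (hdvd : ψ ∣ φ)
    (hnot : ∀ i : Fin d, ¬ Associated ψ (MvPowerSeries.X i)) :
    IsPolygonal (newtonPolyhedron ψ) := by
  classical
  intro F hexp hcomp hne
  obtain ⟨l, hF⟩ := hexp hne
  obtain ⟨x₀, hx₀⟩ := hne
  have hψ0 : ψ ≠ 0 := hψ.ne_zero
  obtain ⟨χ, hφeq⟩ := hdvd
  have hχ0 : χ ≠ 0 := fun h => hφ (by rw [hφeq, h, mul_zero])
  have hx₀F := hx₀
  rw [hF] at hx₀F
  obtain ⟨hx₀N, hx₀max⟩ := hx₀F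
  -- the exposing functional has strictly negative coefficients
  set w : Fin d → ℝ := fun i => -(l (Pi.single i 1)) with hwdef
  have hw : ∀ i, 0 < w i := by
    intro i
    by_contra hcon
    push_neg at hcon
    have hle : 0 ≤ l (Pi.single i 1) := by
      have : -(l (Pi.single i 1)) ≤ 0 := hcon
      linarith
    obtain ⟨C, hC⟩ := isBounded_iff_forall_norm_le.mp hcomp.isBounded
    obtain ⟨n, hn⟩ := exists_nat_gt (C + |x₀ i|)
    set e : Fin d → ℝ := Pi.single i 1 with hedef
    have hmemN : x₀ + (n : ℝ) • e ∈ newtonPolyhedron ψ := by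
      apply newton_up hx₀N
      intro j
      have h01 : (0:ℝ) ≤ if j = i then (1:ℝ) else 0 := by split_ifs <;> norm_num
      simpa [hedef, Pi.single_apply] using mul_nonneg (Nat.cast_nonneg n) h01
    have hmemF : x₀ + (n : ℝ) • e ∈ F := by
      rw [hF]
      refine ⟨hmemN, fun y hy => ?_⟩
      have hval : l (x₀ + (n : ℝ) • e) = l x₀ + n * l (Pi.single i 1) := by
        rw [map_add, map_smul, hedef]; simp
      rw [hval]
      have h1 := hx₀max y hy
      nlinarith [mul_nonneg (Nat.cast_nonneg n : (0:ℝ) ≤ n) hle]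
    have h1 := hC _ hmemF
    have h2 : |x₀ i + (n : ℝ)| ≤ ‖x₀ + (n : ℝ) • e‖ := by
      have h3 := norm_le_pi_norm (x₀ + (n : ℝ) • e) i
      simpa [hedef, Real.norm_eq_abs, Pi.single_eq_same] using h3
    have h4 : (n : ℝ) - |x₀ i| ≤ |x₀ i + (n : ℝ)| := by
      have h5 := abs_sub_abs_le_abs_sub ((n : ℝ)) (-(x₀ i))
      have h6 : |(n:ℝ)| = (n:ℝ) := abs_of_nonneg (Nat.cast_nonneg n)
      have h7 : (n:ℝ) - -(x₀ i) = x₀ i + n := by ring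
      rw [h6, h7, abs_neg] at h5
      exact h5
    linarith
  -- expand `l` in terms of `w`
  have hlx : ∀ x, l x = -(wlin w x) := by
    intro x
    have hexp := LinearMap.pi_apply_eq_sum_univ
      ((l : (Fin d → ℝ) →L[ℝ] ℝ) : (Fin d → ℝ) →ₗ[ℝ] ℝ) x
    have hsingle : ∀ i : Fin d, (fun j => if i = j then (1:ℝ) else 0) = Pi.single i 1 := by
      intro i; funext j; rw [Pi.single_apply]; simp [eq_comm]
    have : l x = ∑ i, x i • l (Pi.single i 1) := by
      simp only [ContinuousLinearMap.coe_coe] at hexp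
      rw [hexp]
      exact Finset.sum_congr rfl fun i _ => by rw [hsingle i]
    rw [this, wlin_apply, ← Finset.sum_neg_distrib]
    refine Finset.sum_congr rfl fun i _ => ?_
    have : w i = -(l (Pi.single i 1)) := rfl
    rw [smul_eq_mul]
    rw [this]; ring
  -- minimal weights
  obtain ⟨mψ, hψm, hψlb⟩ := exists_min w hw hψ0
  obtain ⟨mχ, hχm, hχlb⟩ := exists_min w hw hχ0
  have hφlb : ∀ a, MvPowerSeries.coeff a φ ≠ 0 → mψ + mχ ≤ wlin w (cst a) := by
    rw [hφeq]; exact mul_lb w hψlb hχlb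
  -- the sets of minimal-weight exponents
  set Vψ : Set (Fin d →₀ ℕ) :=
    {a | MvPowerSeries.coeff a ψ ≠ 0 ∧ wlin w (cst a) = mψ} with hVψdef
  set Vφ : Set (Fin d →₀ ℕ) :=
    {a | MvPowerSeries.coeff a φ ≠ 0 ∧ wlin w (cst a) = mψ + mχ} with hVφdef
  set Bψ : Set (Fin d → ℝ) := cst '' Vψ with hBψdef
  set Bφ : Set (Fin d → ℝ) := cst '' Vφ with hBφdef
  -- a specific minimal-weight exponent for φ
  obtain ⟨b₀, c₀, hb₀, hc₀, ha₀, _, _⟩ := key w hw hψm hψlb hχm hχlb (0 : (Fin d → ℝ) →ₗ[ℝ] ℝ)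
  have ha₀φ : (b₀ + c₀) ∈ Vφ := by
    refine ⟨by rw [hφeq]; exact ha₀, ?_⟩
    rw [cst_add, map_add, hb₀.2, hc₀.2]
  -- F is the minimal-weight face of the Newton polyhedron of ψ
  have hFface : F = {x ∈ newtonPolyhedron ψ | wlin w x = mψ} := by
    ext x
    rw [hF]
    simp only [Set.mem_sep_iff]
    constructor
    · rintro ⟨hxN, hxmax⟩
      refine ⟨hxN, le_antisymm ?_ (newton_wlb hw hψlb x hxN)⟩
      obtain ⟨aψ, haψ, haψm⟩ := hψm
      have hmem : cst aψ ∈ newtonPolyhedron ψ :=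
        subset_convexHull ℝ _ (cst_mem_NT haψ)
      have := hxmax (cst aψ) hmem
      rw [hlx, hlx, haψm] at this
      linarith
    · rintro ⟨hxN, hxm⟩
      refine ⟨hxN, fun y hy => ?_⟩
      rw [hlx, hlx, hxm]
      have := newton_wlb hw hψlb y hy
      linarith
  have hFeq : F = convexHull ℝ Bψ := by
    rw [hFface, face_eq hw hψlb]
  -- vectorSpan of Bψ is contained in vectorSpan of Bφ
  have hsub : vectorSpan ℝ Bψ ≤ vectorSpan ℝ Bφ := by
    rw [← Subspace.dualAnnihilator_le_dualAnnihilator_iff]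
    intro f hf
    rw [Submodule.mem_dualAnnihilator] at hf ⊢
    -- f is constant on Bφ
    have hconstφ : ∀ x ∈ Bφ, ∀ y ∈ Bφ, f x = f y := by
      intro x hx y hy
      have hv : x - y ∈ vectorSpan ℝ Bφ := by
        rw [vectorSpan_def]
        exact Submodule.subset_span ⟨x, hx, y, hy, rfl⟩
      have := hf _ hv
      rw [map_sub] at this
      linarith
    obtain ⟨bp, cp, hbp, hcp, hap, hmaxb, hmaxc⟩ := key w hw hψm hψlb hχm hχlb f
    obtain ⟨bm, cm, hbm, hcm, ham, hminb, hminc⟩ := key w hw hψm hψlb hχm hχlb (-f)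
    have hapφ : cst (bp + cp) ∈ Bφ :=
      ⟨bp + cp, ⟨by rw [hφeq]; exact hap, by rw [cst_add, map_add, hbp.2, hcp.2]⟩, rfl⟩
    have hamφ : cst (bm + cm) ∈ Bφ :=
      ⟨bm + cm, ⟨by rw [hφeq]; exact ham, by rw [cst_add, map_add, hbm.2, hcm.2]⟩, rfl⟩
    have heq := hconstφ _ hapφ _ hamφ
    rw [cst_add, map_add, cst_add, map_add] at heq
    have h1 : f (cst bm) ≤ f (cst bp) := hmaxb bm hbm.1 hbm.2
    have h2 : f (cst cm) ≤ f (cst cp) := hmaxc cm hcm.1 hcm.2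
    have hfb : ∀ b', MvPowerSeries.coeff b' ψ ≠ 0 → wlin w (cst b') = mψ →
        f (cst b') = f (cst bp) := by
      intro b' hb'1 hb'2
      have hup := hmaxb b' hb'1 hb'2
      have hdn := hminb b' hb'1 hb'2
      have hdn' := hminb bp hbp.1 hbp.2
      simp only [LinearMap.neg_apply] at hdn hdn'
      linarith
    intro v hv
    rw [vectorSpan_def] at hv
    have hker : Submodule.span ℝ (Bψ -ᵥ Bψ) ≤ LinearMap.ker f := by
      rw [Submodule.span_le]
      rintro u ⟨x, hx, y, hy, rfl⟩
      obtain ⟨bx, hbx, rfl⟩ := hx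
      obtain ⟨by', hby, rfl⟩ := hy
      rw [SetLike.mem_coe, LinearMap.mem_ker]
      show f (cst bx - cst by') = 0
      rw [map_sub, hfb bx hbx.1 hbx.2, hfb by' hby.1 hby.2, sub_self]
    exact LinearMap.mem_ker.mp (hker hv)
  -- the minimal-weight face of the Newton polyhedron of φ is an exposed compact face
  have hfaceφ := face_eq hw hφlb
  have hGexp : IsExposed ℝ (newtonPolyhedron φ) (convexHull ℝ Bφ) := by
    intro _
    refine ⟨LinearMap.toContinuousLinearMap (-(wlin w)), ?_⟩
    rw [← hfaceφ]
    ext x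
    simp only [Set.mem_sep_iff, LinearMap.coe_toContinuousLinearMap',
      LinearMap.neg_apply]
    constructor
    · rintro ⟨hxN, hxm⟩
      refine ⟨hxN, fun y hy => ?_⟩
      have := newton_wlb hw hφlb y hy
      rw [hxm]
      linarith
    · rintro ⟨hxN, hxmax⟩
      refine ⟨hxN, le_antisymm ?_ (newton_wlb hw hφlb x hxN)⟩
      have hmem : cst (b₀ + c₀) ∈ newtonPolyhedron φ :=
        subset_convexHull ℝ _ (cst_mem_NT ha₀φ.1)
      have := hxmax _ hmem
      have h5 := ha₀φ.2
      linarith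
  have hVφfin : Vφ.Finite := (finite_wle w hw (mψ + mχ)).subset fun a ha => ha.2.le
  have hGcomp : IsCompact (convexHull ℝ Bφ) :=
    Set.Finite.isCompact_convexHull ℝ (hVφfin.image _)
  have hGne : (convexHull ℝ Bφ).Nonempty :=
    ⟨cst (b₀ + c₀), subset_convexHull ℝ _ ⟨b₀ + c₀, ha₀φ, rfl⟩⟩
  have hrank := hpoly _ hGexp hGcomp hGne
  rw [vs_conv] at hrank
  calc Module.finrank ℝ (vectorSpan ℝ F)
      = Module.finrank ℝ (vectorSpan ℝ Bψ) := by rw [hFeq, vs_conv]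
    _ ≤ Module.finrank ℝ (vectorSpan ℝ Bφ) := Submodule.finrank_mono hsub
    _ ≤ 1 := hrank
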